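/- For every finite vertex set V, every digraph G=(V,A), every sign vector σ ∈ {−1,1}^A, and every a ∈ [0,1), the set {(T,x) ∈ [0,1]^A × [0,1]^V : the forward orbit {F_{G,σ,T,a}^t(x) : t ∈ ℕ} is disjoint from Δ_T} has full Lebesgue measure in [0,1]^A × [0,1]^V. -/

import Mathlib

open MeasureTheory Filter Topology
open scoped ENNReal

/-- The Heaviside function: `H(s) = 1` if `s ≥ 0`, and `0` otherwise. -/
noncomputable def heaviside (s : ℝ) : ℝ := if 0 ≤ s then 1 else 0

/-- Signs `{-1,1}` encoded by booleans: `true ↦ +1`, `false ↦ -1`. -/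
def signVal (b : Bool) : ℝ := if b then 1 else -1

variable {V : Type*} [Fintype V] [DecidableEq V]

/-- In-degree of a vertex `v` in the arrow set `A`: `Id(v) = #{u : (u,v) ∈ A}`. -/
def inDeg {V : Type*} [DecidableEq V] (A : Finset (V × V)) (v : V) : ℕ :=
  (A.filter fun e => e.2 = v).card

/-- The regulatory map `F_{G,σ,T,a}(x)_v = a x_v + (1-a) (1/Id(v)) Σ_{(u,v)∈A} H(σ_{(u,v)}(x_u - T_{(u,v)}))`
(the interaction term being `0` when `Id(v) = 0`, by the convention `(0 : ℝ)⁻¹ = 0`). -/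
noncomputable def regMap {V : Type*} [Fintype V] [DecidableEq V] (A : Finset (V × V))
    (σ : {e // e ∈ A} → Bool) (T : {e // e ∈ A} → ℝ) (a : ℝ) (x : V → ℝ) : V → ℝ := fun v =>
  a * x v + (1 - a) * ((inDeg A v : ℝ)⁻¹ *
    ∑ e ∈ A.attach.filter (fun e => e.val.2 = v),
      heaviside (signVal (σ e) * (x e.val.1 - T e)))

/-- The cube `[0,1]^V`. -/
def cubeV (V : Type*) [Fintype V] : Set (V → ℝ) := Set.pi Set.univ fun _ => Set.Icc (0:ℝ) 1

/-- The cube `[0,1]^A`. -/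
def cubeA {V : Type*} [Fintype V] [DecidableEq V] (A : Finset (V × V)) :
    Set ({e // e ∈ A} → ℝ) := Set.pi Set.univ fun _ => Set.Icc (0:ℝ) 1

/-- The discontinuity set `Δ_T = {x ∈ [0,1]^V : x_u = T_{(u,v)} for some (u,v) ∈ A}`. -/
def discSet {V : Type*} [Fintype V] [DecidableEq V] (A : Finset (V × V))
    (T : {e // e ∈ A} → ℝ) : Set (V → ℝ) :=
  {x | x ∈ cubeV V ∧ ∃ e : {e // e ∈ A}, x e.val.1 = T e}

/-- `inf_{t ≥ 0} d_max(F^t(x), Δ_T)` as an extended nonnegative real (the metric on `V → ℝ`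
is the sup metric `d_max`, and the distance to the empty set is `∞`). -/
noncomputable def orbitGap {V : Type*} [Fintype V] [DecidableEq V] (A : Finset (V × V))
    (σ : {e // e ∈ A} → Bool) (T : {e // e ∈ A} → ℝ) (a : ℝ) (x : V → ℝ) : ℝ≥0∞ :=
  ⨅ t : ℕ, EMetric.infEdist ((regMap A σ T a)^[t] x) (discSet A T)

/-- `asympPeriod A σ T a x τ` says that the asymptotic period `P(F_{G,σ,T,a}, x)` equals `τ`:
there is a periodic point `y ∈ [0,1]^V` of minimal period `τ ≥ 1` whose orbit attracts that
of `x` (distances are the sup metric `d_max`). -/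
def asympPeriod {V : Type*} [Fintype V] [DecidableEq V] (A : Finset (V × V))
    (σ : {e // e ∈ A} → Bool) (T : {e // e ∈ A} → ℝ) (a : ℝ) (x : V → ℝ) (τ : ℕ) : Prop :=
  1 ≤ τ ∧ ∃ y ∈ cubeV V, (regMap A σ T a)^[τ] y = y ∧
    (∀ t, 0 < t → t < τ → (regMap A σ T a)^[t] y ≠ y) ∧
    Filter.Tendsto (fun t => dist ((regMap A σ T a)^[t] x) ((regMap A σ T a)^[t] y))
      Filter.atTop (nhds 0)

/-- Countable set of possible "offsets" accumulated along an orbit. -/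
def Rset (a : ℝ) : Set ℝ :=
  ⋃ n : ℕ, Set.range (fun q : Fin n → ℚ => ∑ i : Fin n, a ^ (i : ℕ) * ((1 - a) * (q i : ℝ)))

lemma Rset_countable (a : ℝ) : (Rset a).Countable :=
  Set.countable_iUnion fun _ => Set.countable_range _

lemma zero_mem_Rset (a : ℝ) : (0:ℝ) ∈ Rset a :=
  Set.mem_iUnion.2 ⟨0, Set.mem_range.2 ⟨fun i => 0, by simp⟩⟩

lemma Rset_step (a : ℝ) {r : ℝ} (hr : r ∈ Rset a) (q : ℚ) :
    a * r + (1 - a) * (q : ℝ) ∈ Rset a := by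
  obtain ⟨n, qf, rfl⟩ : ∃ (n : ℕ) (qf : Fin n → ℚ),
      (∑ i : Fin n, a ^ (i : ℕ) * ((1 - a) * (qf i : ℝ))) = r := by
    obtain ⟨s, hs⟩ := Set.mem_iUnion.1 hr
    obtain ⟨qf, hq⟩ := hs
    exact ⟨s, qf, hq⟩
  refine Set.mem_iUnion.2 ⟨n + 1, Set.mem_range.2 ⟨Fin.cons q qf, ?_⟩⟩
  beta_reduce
  rw [Fin.sum_univ_succ, Finset.mul_sum]
  simp only [Fin.cons_zero, Fin.cons_succ, Fin.val_succ, Fin.val_zero, pow_zero, one_mul]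
  rw [add_comm]
  congr 1
  refine Finset.sum_congr rfl fun i _ => by ring

lemma interaction_rat (A : Finset (V × V)) (σ : {e // e ∈ A} → Bool)
    (T : {e // e ∈ A} → ℝ) (x : V → ℝ) (v : V) :
    ∃ q : ℚ, (inDeg A v : ℝ)⁻¹ *
      ∑ e ∈ A.attach.filter (fun e => e.val.2 = v),
        heaviside (signVal (σ e) * (x e.val.1 - T e)) = (q : ℝ) := by
  classical
  set s := A.attach.filter (fun e => e.val.2 = v)
  set k : ℕ := ∑ e ∈ s, if 0 ≤ signVal (σ e) * (x e.val.1 - T e) then 1 else 0 with hk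
  have hsum : (∑ e ∈ s, heaviside (signVal (σ e) * (x e.val.1 - T e))) = (k : ℝ) := by
    rw [hk, Nat.cast_sum]
    refine Finset.sum_congr rfl fun e _ => ?_
    simp [heaviside, apply_ite (Nat.cast : ℕ → ℝ)]
  refine ⟨(k : ℚ) / (inDeg A v : ℚ), ?_⟩
  rw [hsum, Rat.cast_div, Rat.cast_natCast, Rat.cast_natCast, div_eq_inv_mul]

lemma orbit_form (A : Finset (V × V)) (σ : {e // e ∈ A} → Bool)
    (T : {e // e ∈ A} → ℝ) (a : ℝ) :
    ∀ (t : ℕ) (x : V → ℝ) (v : V),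
      ∃ r ∈ Rset a, (regMap A σ T a)^[t] x v = a ^ t * x v + r := by
  intro t
  induction t with
  | zero => exact fun x v => ⟨0, zero_mem_Rset a, by simp⟩
  | succ t ih =>
    intro x v
    obtain ⟨r, hr, hEq⟩ := ih x v
    obtain ⟨q, hq⟩ := interaction_rat A σ T ((regMap A σ T a)^[t] x) v
    refine ⟨a * r + (1 - a) * (q : ℝ), Rset_step a hr q, ?_⟩
    rw [Function.iterate_succ_apply']
    show regMap A σ T a ((regMap A σ T a)^[t] x) v = _
    rw [regMap, hq, hEq]
    ring

lemma hyperplane_null {ι : Type*} [Fintype ι] [DecidableEq ι]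
    (e : ι) (u : V) (c r : ℝ) :
    volume {p : (ι → ℝ) × (V → ℝ) | p.1 e = c * p.2 u + r} = 0 := by
  classical
  set L : ((ι → ℝ) × (V → ℝ)) →ₗ[ℝ] ℝ :=
    (LinearMap.proj e).comp (LinearMap.fst ℝ (ι → ℝ) (V → ℝ))
      - c • (LinearMap.proj u).comp (LinearMap.snd ℝ (ι → ℝ) (V → ℝ)) with hL
  have hLapp : ∀ p : (ι → ℝ) × (V → ℝ), L p = p.1 e - c * p.2 u := by
    intro p; simp [hL, LinearMap.sub_apply, LinearMap.smul_apply]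
  have hL1 : L (Pi.single e 1, 0) = 1 := by simp [hLapp]
  set p₀ : (ι → ℝ) × (V → ℝ) := (Pi.single e r, 0) with hp₀
  have hLp₀ : L p₀ = r := by simp [hLapp, hp₀]
  have hset : {p : (ι → ℝ) × (V → ℝ) | p.1 e = c * p.2 u + r}
      = (fun q => -p₀ + q) ⁻¹' (LinearMap.ker L : Set ((ι → ℝ) × (V → ℝ))) := by
    ext p
    simp only [Set.mem_setOf_eq, Set.mem_preimage, SetLike.mem_coe, LinearMap.mem_ker, hLapp,
      hp₀, Prod.fst_add, Prod.snd_add, Prod.fst_neg, Prod.snd_neg, Pi.add_apply, Pi.neg_apply,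
      Pi.single_eq_same, Pi.zero_apply, neg_zero, add_zero, zero_add]
    constructor <;> intro h <;> linarith
  haveI : (volume : Measure ((ι → ℝ) × (V → ℝ))).IsAddHaarMeasure := by
    rw [Measure.volume_eq_prod]; exact Measure.prod.instIsAddHaarMeasure _ _
  rw [hset, measure_preimage_add]
  refine Measure.addHaar_submodule volume (LinearMap.ker L) ?_
  intro htop
  have : L = 0 := LinearMap.ker_eq_top.mp htop
  rw [this] at hL1
  simpa using hL1

/-- For every finite vertex set `V`, digraph `G=(V,A)`, sign vector
`σ ∈ {-1,1}^A` and `a ∈ [0,1)`, the set of pairs `(T,x) ∈ [0,1]^A × [0,1]^V` whose forward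
orbit `{F_{G,σ,T,a}^t(x) : t ∈ ℕ}` is disjoint from `Δ_T` has full Lebesgue measure in
`[0,1]^A × [0,1]^V` (which has total measure `1`). -/
theorem orbit_avoids_discontinuity_full_measure (V : Type*) [Fintype V] [DecidableEq V]
    (A : Finset (V × V)) (σ : {e // e ∈ A} → Bool) (a : ℝ) (ha0 : 0 ≤ a) (ha1 : a < 1) :
    volume {p : ({e // e ∈ A} → ℝ) × (V → ℝ) |
        p.1 ∈ cubeA A ∧ p.2 ∈ cubeV V ∧
        ∀ t : ℕ, (regMap A σ p.1 a)^[t] p.2 ∉ discSet A p.1} = 1 := by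
  classical
  set B : Set (({e // e ∈ A} → ℝ) × (V → ℝ)) :=
    {p | ∃ t : ℕ, (regMap A σ p.1 a)^[t] p.2 ∈ discSet A p.1} with hB
  set N : Set (({e // e ∈ A} → ℝ) × (V → ℝ)) :=
    ⋃ t : ℕ, ⋃ e : {e // e ∈ A}, ⋃ r ∈ Rset a,
      {p | p.1 e = a ^ t * p.2 e.val.1 + r} with hN
  have hBN : B ⊆ N := by
    rintro p ⟨t, hmem⟩
    obtain ⟨-, e, he⟩ := hmem
    obtain ⟨r, hr, heq⟩ := orbit_form A σ p.1 a t p.2 e.val.1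
    refine Set.mem_iUnion.2 ⟨t, Set.mem_iUnion.2 ⟨e, Set.mem_iUnion₂.2 ⟨r, hr, ?_⟩⟩⟩
    rw [Set.mem_setOf_eq, ← he, heq]
  have hNnull : volume N = 0 := by
    refine measure_iUnion_null fun t => measure_iUnion_null fun e => ?_
    rw [measure_biUnion_null_iff (Rset_countable a)]
    intro r _
    exact hyperplane_null e e.val.1 (a ^ t) r
  have hBnull : volume B = 0 := measure_mono_null hBN hNnull
  have hSeq : {p : ({e // e ∈ A} → ℝ) × (V → ℝ) |
        p.1 ∈ cubeA A ∧ p.2 ∈ cubeV V ∧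
        ∀ t : ℕ, (regMap A σ p.1 a)^[t] p.2 ∉ discSet A p.1}
      = (cubeA A ×ˢ cubeV V) \ B := by
    ext p
    simp only [Set.mem_setOf_eq, Set.mem_diff, Set.mem_prod, hB, not_exists]
    tauto
  rw [hSeq, measure_diff_null hBnull]
  rw [Measure.volume_eq_prod, Measure.prod_prod]
  rw [cubeA, cubeV, volume_pi_pi, volume_pi_pi]
  simp [Real.volume_Icc]
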